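/- arXiv:1604.05390 — 5 statements merged into one kernel-verified Lean document; each statement's English description precedes it below -/
import Mathlib

section
/- Let $s>0$, $K\in\mathbb{R}$, and $b_0,b_1,b_2\in\mathbb{R}$ with $b_1^2-b_0b_2=1$ and $(b_0+s^2Kb_2)^2+4s^2K=36s^4$. Suppose the Sasaki–Einstein conditions hold: $Kb_0-s^2K^2b_2=18s^2b_0$, $Kb_1=9s^2b_1$, and $s^2Kb_2-b_0=18s^4b_2$. Then $K=9s^2$ and $b_0+s^2Kb_2=0$. -/
theorem stmt8 (s K b0 b1 b2 : ℝ) (hs : s > 0)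
    (hb : b1 ^ 2 - b0 * b2 = 1)
    (hnh : (b0 + s ^ 2 * K * b2) ^ 2 + 4 * s ^ 2 * K = 36 * s ^ 4)
    (h1 : K * b0 - s ^ 2 * K ^ 2 * b2 = 18 * s ^ 2 * b0)
    (h2 : K * b1 = 9 * s ^ 2 * b1)
    (h3 : s ^ 2 * K * b2 - b0 = 18 * s ^ 4 * b2) :
    K = 9 * s ^ 2 ∧ b0 + s ^ 2 * K * b2 = 0 := by
  have hs2 : s ^ 2 > 0 := by positivity
  have hK3 : K * (s ^ 2 * K * b2 - b0) = K * (18 * s ^ 4 * b2) := by rw [h3]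
  have hA : b0 + s ^ 2 * K * b2 = 0 := by
    have h4 : 18 * s ^ 2 * (b0 + s ^ 2 * K * b2) = 0 := by nlinarith [hK3, h1]
    have := mul_eq_zero.mp h4
    rcases this with h | h
    · nlinarith
    · exact h
  refine ⟨?_, hA⟩
  have : 4 * s ^ 2 * K = 36 * s ^ 4 := by rw [hA] at hnh; nlinarith
  nlinarith
end

section
/- Let $b_0,b_1,b_2,c_0,c_1,c_2\in\mathbb{R}$ satisfy the type-I constraints $b_1^2-b_0b_2=c_1^2-c_0c_2=1$ and $b_0c_2+b_2c_0-2b_1c_1=0$, together with $b_1c_0-b_0c_1=1$, $b_2c_1-b_1c_2=1$, $b_2c_0-b_0c_2=0$ (i.e. the induced metric matrix equals the identity). Then $b_0=-b_2=-c_1$, $b_1=c_0=-c_2$, and $b_0^2+b_1^2=1$. -/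
theorem stmt12 (b0 b1 b2 c0 c1 c2 : ℝ)
    (hb : b1 ^ 2 - b0 * b2 = 1) (hc : c1 ^ 2 - c0 * c2 = 1)
    (hmix : b0 * c2 + b2 * c0 - 2 * b1 * c1 = 0)
    (hg11 : b1 * c0 - b0 * c1 = 1)
    (hg33 : b2 * c1 - b1 * c2 = 1)
    (hg13 : b2 * c0 - b0 * c2 = 0) :
    b0 = -b2 ∧ b0 = -c1 ∧ b1 = c0 ∧ b1 = -c2 ∧ b0 ^ 2 + b1 ^ 2 = 1 := by
  have e1 : b0 * c2 - b1 * c1 = 0 := by linarith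
  have e2 : b2 * c0 - b1 * c1 = 0 := by linarith
  have h2 : b0 = -c1 := by
    linear_combination -c1 * hg11 - c0 * e1 - b0 * hc
  have h3 : b1 = c0 := by
    linear_combination -b1 * hg11 + b0 * e2 + c0 * hb
  have hbc : b2 = c1 := by
    linear_combination c1 * hg33 - c2 * e2 - b2 * hc
  have h1 : b0 = -b2 := by rw [hbc]; exact h2
  have h4 : b1 = -c2 := by
    linear_combination -b1 * hg33 - b2 * e1 - c2 * hb
  exact ⟨h1, h2, h3, h4, by linear_combination hb + b0 * h1⟩
end

section
/- Let $s,p\in\mathbb{R}$ with $s\neq 0$, $p\neq 0$, let $a_0,a_2,a_3,b_0,b_1,b_2\in\mathbb{R}$ with $a_2\neq 0$, and let $K=a_0/(a_2s^2)$. Assume $a_3^2-a_0a_2=a_3p$, $b_1^2-b_0b_2=a_3p$, $a_0b_2+a_2b_0=0$, and $(b_0-s^2Kb_2)^2+4s^2Kb_1^2=36s^4a_3p^3$. Then $a_0/a_2=9s^4p^2$, i.e. $K=9s^2p^2$. -/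
theorem stmt14 (s p a0 a2 a3 b0 b1 b2 : ℝ)
    (hs : s ≠ 0) (hp : p ≠ 0) (ha2 : a2 ≠ 0)
    (K : ℝ) (hK : K = a0 / (a2 * s ^ 2))
    (h1 : a3 ^ 2 - a0 * a2 = a3 * p)
    (h2 : b1 ^ 2 - b0 * b2 = a3 * p)
    (h3 : a0 * b2 + a2 * b0 = 0)
    (h4 : (b0 - s ^ 2 * K * b2) ^ 2 + 4 * s ^ 2 * K * b1 ^ 2 = 36 * s ^ 4 * a3 * p ^ 3)
    (ha3p : a3 * p ≠ 0) :
    a0 / a2 = 9 * s ^ 4 * p ^ 2 ∧ K = 9 * s ^ 2 * p ^ 2 := by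
  subst hK
  field_simp at h4
  have ha3 : a3 ≠ 0 := left_ne_zero_of_mul ha3p
  have hc : (4 : ℝ) * s ^ 6 * a2 ^ 2 * a3 * p ≠ 0 := by
    exact mul_ne_zero (mul_ne_zero (mul_ne_zero (mul_ne_zero (by norm_num)
      (pow_ne_zero 6 hs)) (pow_ne_zero 2 ha2)) ha3) hp
  have key : a0 = 9 * s ^ 4 * p ^ 2 * a2 := by
    have h : (4 : ℝ) * s ^ 6 * a2 ^ 2 * a3 * p * a0 =
        4 * s ^ 6 * a2 ^ 2 * a3 * p * (9 * s ^ 4 * p ^ 2 * a2) := by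
      linear_combination s ^ 6 * a2 * (h4 - 4 * a0 * a2 * h2 -
        (a0 * b2 + a2 * b0) * h3)
    exact mul_left_cancel₀ hc h
  constructor
  · field_simp [key]
    linear_combination key
  · field_simp [key]
    linear_combination key
end

section
/- Under the double-hypo type-II hypotheses with $c_0=\tfrac{Kb_1}{3p}$, $c_1=-\tfrac{b_0}{3s^2p}$, $c_2=-\tfrac{b_1}{3s^2p}$ and $K=a_0/(a_2s^2)$, $a_0b_2+a_2b_0=0$, define $g_{11}=a_3(b_1c_0-b_0c_1)$, $g_{33}=a_3(b_2c_1-b_1c_2)$, $g_{13}=\tfrac12 a_3(b_2c_0-b_0c_2)$, $g_{23}=\tfrac12\big(b_1(a_0c_2-a_2c_0)+c_1(a_2b_0-a_0b_2)\big)$. Then, assuming $b_1^2-b_0b_2=a_3p$ and $a_3^2-a_0a_2=a_3p$: $g_{11}=\tfrac{a_0a_3^2}{3a_2s^2}$, $g_{33}=\tfrac{a_3^2}{3s^2}$, $g_{13}=0$, $g_{23}=-\tfrac{a_0a_3}{3s^2}$, and $g_{11}g_{33}-g_{13}^2-g_{23}^2=\tfrac{a_0a_3^3p}{9a_2s^4}$.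 -/
theorem stmt16 (s p a0 a2 a3 b0 b1 b2 : ℝ)
    (hs : s ≠ 0) (hp : p ≠ 0) (ha2 : a2 ≠ 0)
    (K : ℝ) (hK : K = a0 / (a2 * s ^ 2))
    (h3 : a0 * b2 + a2 * b0 = 0)
    (c0 c1 c2 : ℝ)
    (hc0 : c0 = K * b1 / (3 * p))
    (hc1 : c1 = -(b0 / (3 * s ^ 2 * p)))
    (hc2 : c2 = -(b1 / (3 * s ^ 2 * p)))
    (g11 g33 g13 g23 : ℝ)
    (hg11 : g11 = a3 * (b1 * c0 - b0 * c1))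
    (hg33 : g33 = a3 * (b2 * c1 - b1 * c2))
    (hg13 : g13 = a3 * (b2 * c0 - b0 * c2) / 2)
    (hg23 : g23 = (b1 * (a0 * c2 - a2 * c0) + c1 * (a2 * b0 - a0 * b2)) / 2)
    (h2 : b1 ^ 2 - b0 * b2 = a3 * p)
    (h1 : a3 ^ 2 - a0 * a2 = a3 * p) :
    g11 = a0 * a3 ^ 2 / (3 * a2 * s ^ 2) ∧
    g33 = a3 ^ 2 / (3 * s ^ 2) ∧
    g13 = 0 ∧
    g23 = -(a0 * a3 / (3 * s ^ 2)) ∧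
    g11 * g33 - g13 ^ 2 - g23 ^ 2 = a0 * a3 ^ 3 * p / (9 * a2 * s ^ 4) := by
  have e11 : g11 = a0 * a3 ^ 2 / (3 * a2 * s ^ 2) := by
    subst hK hc0 hc1 hg11
    field_simp
    linear_combination (a3*a0) * h2 + (a3*b0) * h3
  have e33 : g33 = a3 ^ 2 / (3 * s ^ 2) := by
    subst hc1 hc2 hg33
    field_simp
    linear_combination (a3) * h2
  have e13 : g13 = 0 := by
    subst hK hc0 hc2 hg13
    field_simp
    linear_combination (a3*b1) * h3
  have e23 : g23 = -(a0 * a3 / (3 * s ^ 2)) := by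
    subst hK hc0 hc1 hc2 hg23
    field_simp
    linear_combination (-2*a0) * h2 + (-b0) * h3
  refine ⟨e11, e33, e13, e23, ?_⟩
  rw [e11, e33, e13, e23]
  field_simp
  linear_combination (9*a0*a3^2) * h1
end

section
/- Let $p>0$, $s>0$, and constants $a_4,b_0,c_0,b_4,c_4,b_5,c_5\in\mathbb{R}$. Define functions of $t$: $A_3=2pt+a_4$, $B_0=b_0$, $C_0=c_0$, $B_1=\tfrac{c_0}{2ps^2}t+b_4$, $C_1=-\tfrac{b_0}{2ps^2}t+c_4$, $B_2=-\tfrac{b_0}{4p^2s^4}t^2+\tfrac{c_4}{ps^2}t+b_5$, $C_2=-\tfrac{c_0}{4p^2s^4}t^2-\tfrac{b_4}{ps^2}t+c_5$. If $b_0^2+c_0^2=16p^4s^4$, $b_4c_0-b_0c_4=4p^2s^2a_4$, $b_4^2-b_0b_5=c_4^2-c_0c_5=a_4^2$, and $b_0c_5+b_5c_0-2b_4c_4=0$, then for all $t$: $B_1(t)^2-B_0(t)B_2(t)=A_3(t)^2$, $C_1(t)^2-C_0(t)C_2(t)=A_3(t)^2$, and $B_0(t)C_2(t)+B_2(t)C_0(t)-2B_1(t)C_1(t)=0$.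 -/
theorem stmt18 (p s : ℝ) (hp : p > 0) (hs : s > 0)
    (a4 b0 c0 b4 c4 b5 c5 : ℝ)
    (A3 B0 C0 B1 C1 B2 C2 : ℝ → ℝ)
    (hA3 : ∀ t, A3 t = 2 * p * t + a4)
    (hB0 : ∀ t, B0 t = b0) (hC0 : ∀ t, C0 t = c0)
    (hB1 : ∀ t, B1 t = c0 / (2 * p * s ^ 2) * t + b4)
    (hC1 : ∀ t, C1 t = -(b0 / (2 * p * s ^ 2)) * t + c4)
    (hB2 : ∀ t, B2 t = -(b0 / (4 * p ^ 2 * s ^ 4)) * t ^ 2 + c4 / (p * s ^ 2) * t + b5)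
    (hC2 : ∀ t, C2 t = -(c0 / (4 * p ^ 2 * s ^ 4)) * t ^ 2 - b4 / (p * s ^ 2) * t + c5)
    (h1 : b0 ^ 2 + c0 ^ 2 = 16 * p ^ 4 * s ^ 4)
    (h2 : b4 * c0 - b0 * c4 = 4 * p ^ 2 * s ^ 2 * a4)
    (h3 : b4 ^ 2 - b0 * b5 = a4 ^ 2)
    (h4 : c4 ^ 2 - c0 * c5 = a4 ^ 2)
    (h5 : b0 * c5 + b5 * c0 - 2 * b4 * c4 = 0) :
    ∀ t, B1 t ^ 2 - B0 t * B2 t = A3 t ^ 2 ∧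
      C1 t ^ 2 - C0 t * C2 t = A3 t ^ 2 ∧
      B0 t * C2 t + B2 t * C0 t - 2 * B1 t * C1 t = 0 := by
  intro t
  have hps : p * s ^ 2 ≠ 0 := by positivity
  refine ⟨?_, ?_, ?_⟩
  · rw [hB1, hB0, hB2, hA3]
    field_simp
    linear_combination (4*t^2)*h1 + (16*p*s^2*t)*h2 + (16*p^2*s^4)*h3
  · rw [hC1, hC0, hC2, hA3]
    field_simp
    linear_combination (4*t^2)*h1 + (16*p*s^2*t)*h2 + (16*p^2*s^4)*h4
  · rw [hB0, hC0, hB1, hC1, hB2, hC2]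
    field_simp
    linear_combination (8*p^2*s^4)*h5
end
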